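/- Conversely, if there exists a valid on/off assignment to the switch nodes of the lattice network such that the output node receives the maximal value s = Σ_i s_i, then the 3-partition instance has a solution: the columns containing on-switches partition the indices {1,…,3m} into m triples each summing to s/m. -/

import Mathlib

/-- Conversely, if there exists a valid on/off assignment to the
switch nodes of the lattice network such that the output node receives the
maximal value `s = Σ_i s_i`, then the 3-partition instance has a solution: the
columns containing on-switches partition the indices `{1,…,3m}` into `m`
triples each summing to `s/m`.

Validity of `σ`: at most one on-switch per row (an on-switch consumes the full
horizontal flow `s i`), and in each column the total vertical consumption
cannot exceed the top influx `s/m` (vertical flows stay nonnegative).  The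
output is `Σ_i Σ_j (if σ i j then s i else 0)`. -/
theorem switch_lattice_max_output_gives_partition
    (m : ℕ) (hm : 0 < m)
    (s : Fin (3 * m) → ℕ) (hpos : ∀ i, 0 < s i)
    (hdvd : m ∣ ∑ i, s i)
    (hbound : ∀ i, ((∑ k, s k : ℕ) : ℚ) / (4 * m) < (s i : ℚ)
      ∧ ((s i : ℕ) : ℚ) < ((∑ k, s k : ℕ) : ℚ) / (2 * m))
    (σ : Fin (3 * m) → Fin m → Bool)
    (hrow : ∀ i j k, σ i j = true → σ i k = true → j = k)
    (hcolcap : ∀ j, ∑ i ∈ Finset.univ.filter (fun i => σ i j = true), s i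
      ≤ (∑ i, s i) / m)
    (hmax : (∑ i, ∑ j, (if σ i j then s i else 0)) = ∑ i, s i) :
    (∀ i, ∃! j, σ i j = true)
    ∧ ∀ j, (Finset.univ.filter (fun i => σ i j = true)).card = 3
      ∧ ∑ i ∈ Finset.univ.filter (fun i => σ i j = true), s i = (∑ i, s i) / m := by
  classical
  set T := ∑ i, s i with hT
  set q := T / m with hq
  have hmq : m * q = T := Nat.mul_div_cancel' hdvd
  -- each row's inner sum equals (number of on-switches in row) * s i
  have hinner : ∀ i, (∑ j, if σ i j then s i else 0) =
      (Finset.univ.filter (fun j => σ i j = true)).card * s i := by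
    intro i
    rw [← Finset.sum_filter, Finset.sum_const, smul_eq_mul]
  have hcard_le : ∀ i, (Finset.univ.filter (fun j => σ i j = true)).card ≤ 1 := by
    intro i
    apply Finset.card_le_one.mpr
    intro a ha b hb
    simp only [Finset.mem_filter] at ha hb
    exact hrow i a b ha.2 hb.2
  have hrow_le : ∀ i ∈ Finset.univ, (∑ j, if σ i j then s i else 0) ≤ s i := by
    intro i _
    rw [hinner i]
    calc (Finset.univ.filter (fun j => σ i j = true)).card * s i ≤ 1 * s i :=
          Nat.mul_le_mul_right _ (hcard_le i)
      _ = s i := one_mul _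
  have hrow_eq : ∀ i ∈ (Finset.univ : Finset (Fin (3 * m))),
      (∑ j, if σ i j then s i else 0) = s i :=
    (Finset.sum_eq_sum_iff_of_le hrow_le).mp hmax
  -- each row has exactly one on switch
  have hcard_one : ∀ i, (Finset.univ.filter (fun j => σ i j = true)).card = 1 := by
    intro i
    have h := hrow_eq i (Finset.mem_univ i)
    rw [hinner i] at h
    have := (hpos i)
    nlinarith [hcard_le i]
  have hexu : ∀ i, ∃! j, σ i j = true := by
    intro i
    obtain ⟨a, ha⟩ := Finset.card_eq_one.mp (hcard_one i)
    refine ⟨a, ?_, ?_⟩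
    · have : a ∈ Finset.univ.filter (fun j => σ i j = true) := by
        rw [ha]; exact Finset.mem_singleton_self a
      simpa using this
    · intro y hy
      have : y ∈ Finset.univ.filter (fun j => σ i j = true) := by
        simp [hy]
      rw [ha] at this
      simpa using this
  -- column sums
  have hcol_sum : ∀ j, ∑ i ∈ Finset.univ.filter (fun i => σ i j = true), s i =
      ∑ i, if σ i j then s i else 0 := by
    intro j; rw [Finset.sum_filter]
  have htot : (∑ j, ∑ i ∈ Finset.univ.filter (fun i => σ i j = true), s i) = T := by
    calc (∑ j, ∑ i ∈ Finset.univ.filter (fun i => σ i j = true), s i)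
        = ∑ j, ∑ i, if σ i j then s i else 0 := by
          exact Finset.sum_congr rfl fun j _ => hcol_sum j
      _ = ∑ i, ∑ j, if σ i j then s i else 0 := Finset.sum_comm
      _ = T := hmax
  have hcol_eq : ∀ j ∈ (Finset.univ : Finset (Fin m)),
      (∑ i ∈ Finset.univ.filter (fun i => σ i j = true), s i) = q := by
    apply (Finset.sum_eq_sum_iff_of_le (fun j _ => hcolcap j)).mp
    rw [htot, Finset.sum_const, Finset.card_univ, Fintype.card_fin, smul_eq_mul, hmq]
  have hcol : ∀ j, (∑ i ∈ Finset.univ.filter (fun i => σ i j = true), s i) = q :=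
    fun j => hcol_eq j (Finset.mem_univ j)
  -- cardinality 3 per column, via rational bounds
  have hTpos : 0 < T := by
    apply Finset.sum_pos (fun i _ => hpos i)
    exact ⟨⟨0, by omega⟩, Finset.mem_univ _⟩
  have hqQ : (q : ℚ) = (T : ℚ) / m := by
    rw [eq_div_iff (by positivity : (m : ℚ) ≠ 0)]
    exact_mod_cast (by rw [mul_comm] at hmq; exact hmq)
  have hcard3 : ∀ j, (Finset.univ.filter (fun i => σ i j = true)).card = 3 := by
    intro j
    set F := Finset.univ.filter (fun i => σ i j = true) with hF
    set c := F.card with hc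
    have hsumQ : (∑ i ∈ F, (s i : ℚ)) = (T : ℚ) / m := by
      rw [← hqQ]; exact_mod_cast hcol j
    have hne : F.Nonempty := by
      by_contra hemp
      rw [Finset.not_nonempty_iff_eq_empty] at hemp
      rw [hemp] at hsumQ
      simp at hsumQ
      have : (0:ℚ) < (T:ℚ)/m := by positivity
      rw [← hsumQ] at this; exact lt_irrefl _ this
    have hcpos : 0 < c := Finset.card_pos.mpr hne
    -- lower bound: sum > c * (T/(4m))
    have hlow : (c : ℚ) * ((T : ℚ) / (4 * m)) < ∑ i ∈ F, (s i : ℚ) := by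
      have := Finset.sum_lt_sum_of_nonempty hne
        (f := fun _ => (T : ℚ) / (4 * m)) (g := fun i => (s i : ℚ))
        (fun i _ => (hbound i).1)
      simpa [Finset.sum_const, nsmul_eq_mul] using this
    -- upper bound: sum < c * (T/(2m))
    have hhigh : (∑ i ∈ F, (s i : ℚ)) < (c : ℚ) * ((T : ℚ) / (2 * m)) := by
      have := Finset.sum_lt_sum_of_nonempty hne
        (f := fun i => (s i : ℚ)) (g := fun _ => (T : ℚ) / (2 * m))
        (fun i _ => (hbound i).2)
      simpa [Finset.sum_const, nsmul_eq_mul] using this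
    rw [hsumQ] at hlow hhigh
    have hmQ : (0:ℚ) < m := by exact_mod_cast hm
    have hTQ : (0:ℚ) < T := by exact_mod_cast hTpos
    -- c < 4 and c > 2
    have h4 : c < 4 := by
      by_contra h
      push_neg at h
      have hc4 : (4:ℚ) ≤ c := by exact_mod_cast h
      have : (4:ℚ) * ((T:ℚ)/(4*m)) ≤ (c:ℚ) * ((T:ℚ)/(4*m)) :=
        mul_le_mul_of_nonneg_right hc4 (by positivity)
      have h4e : (4:ℚ) * ((T:ℚ)/(4*m)) = (T:ℚ)/m := by field_simp
      linarith
    have h2 : 2 < c := by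
      by_contra h
      push_neg at h
      have hc2 : (c:ℚ) ≤ 2 := by exact_mod_cast h
      have : (c:ℚ) * ((T:ℚ)/(2*m)) ≤ 2 * ((T:ℚ)/(2*m)) :=
        mul_le_mul_of_nonneg_right hc2 (by positivity)
      have h2e : (2:ℚ) * ((T:ℚ)/(2*m)) = (T:ℚ)/m := by field_simp
      linarith
    omega
  exact ⟨hexu, fun j => ⟨hcard3 j, hcol j⟩⟩
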